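/- Let D be a discrete space of infinite cardinality κ and I an ideal on ℕ. Suppose that for every monotone f : D^{<ℕ} → P(I) such that for each finite sequence s: (i) f(s) is hereditary, (ii') I = ⋃_{d ∈ D} f(s⌢d), and (iii) f(s) = ⋂_{d ∈ D} f(s⌢d), there exists σ ∈ D^ℕ with ⋃_k f(σ|_k) = I. Then I is a Baire ideal for every complete metric space X of weight at most κ: for every monotone F : I → NWD(X), ⋃_{A ∈ I} F(A) ≠ X. -/

import Mathlib

open scoped ENNReal Cardinal

/-- An ideal on ℕ containing all finite sets, closed under subsets and finite
unions, with `ℕ ∉ I`. -/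
def IsIdealOn (I : Set (Set ℕ)) : Prop :=
  Set.univ ∉ I ∧ (∀ A ∈ I, ∀ B, B ⊆ A → B ∈ I) ∧
    (∀ A ∈ I, ∀ B ∈ I, A ∪ B ∈ I) ∧ (∀ A : Set ℕ, A.Finite → A ∈ I)

/-- `β` is a basis of the ideal `I`: a cofinal (under inclusion) subfamily. -/
def IsIdealBasis (I β : Set (Set ℕ)) : Prop := β ⊆ I ∧ ∀ A ∈ I, ∃ B ∈ β, A ⊆ B

/-- `I` is a Baire ideal for the topological space `X`: for every monotone family of
nowhere dense subsets of `X` indexed by `I`, the union is not all of `X`. -/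
def IsBaireIdealFor (I : Set (Set ℕ)) (X : Type*) [TopologicalSpace X] : Prop :=
  ∀ f : Set ℕ → Set X, (∀ A ∈ I, IsNowhereDense (f A)) →
    (∀ A ∈ I, ∀ B ∈ I, A ⊆ B → f A ⊆ f B) → (⋃ A ∈ I, f A) ≠ Set.univ

/-- If the tree property (4) holds for trees over an infinite `D`, then `I` is a Baire
ideal for every complete metric space of weight at most `#D`. -/
theorem stmt_6 (D : Type) [Infinite D]
    (I : Set (Set ℕ)) (hI : IsIdealOn I)
    (htree : ∀ f : List D → Set (Set ℕ),
      (∀ s t : List D, s <+: t → f s ⊆ f t) →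
      (∀ s : List D, f s ⊆ I) →
      (∀ s : List D, ∀ A ∈ f s, ∀ B : Set ℕ, B ⊆ A → B ∈ f s) →
      (∀ s : List D, (⋃ d : D, f (s ++ [d])) = I) →
      (∀ s : List D, f s = ⋂ d : D, f (s ++ [d])) →
      ∃ σ : ℕ → D, (⋃ k : ℕ, f (List.ofFn fun i : Fin k => σ i)) = I)
    (X : Type) [MetricSpace X] [CompleteSpace X] [Nonempty X]
    (hw : ∃ ℬ : Set (Set X), TopologicalSpace.IsTopologicalBasis ℬ ∧
      Cardinal.mk ℬ ≤ Cardinal.mk D)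
    (F : Set ℕ → Set X)
    (hnwd : ∀ A ∈ I, IsNowhereDense (F A))
    (hmono : ∀ A ∈ I, ∀ B ∈ I, A ⊆ B → F A ⊆ F B) :
    (⋃ A ∈ I, F A) ≠ Set.univ := by
  classical
  intro hcontra
  obtain ⟨ℬ, hB, hcard⟩ := hw
  obtain ⟨x0⟩ := ‹Nonempty X›
  obtain ⟨B0, hB0, hx0, -⟩ := hB.exists_subset_of_mem_open (Set.mem_univ x0) isOpen_univ
  haveI : Nonempty ↥ℬ := ⟨⟨B0, hB0⟩⟩
  obtain ⟨emb⟩ := (Cardinal.le_def _ _).mp hcard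
  -- an enumeration of the basis by `D`
  set U : D → Set X := fun d => ((Function.invFun emb d : ↥ℬ) : Set X) with hU
  have hUB : ∀ d, U d ∈ ℬ := fun d => (Function.invFun emb d).2
  have hUopen : ∀ d, IsOpen (U d) := fun d => hB.isOpen (hUB d)
  have hUsurj : ∀ B ∈ ℬ, ∃ d, U d = B := by
    intro B hBB
    obtain ⟨d, hd⟩ := Function.invFun_surjective emb.injective ⟨B, hBB⟩
    exact ⟨d, by simp [hU, hd]⟩
  -- the condition under which we use the basic set `U d` at a node
  set Cond : Set X → ℕ → D → Prop := fun V n d =>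
    closure (U d) ⊆ V ∧ Bornology.IsBounded (U d) ∧ Metric.diam (U d) ≤ (1/2)^n ∧
      (U d).Nonempty with hCond
  -- choice of the next open set at each node
  have hstepEx : ∀ (V : Set X) (n : ℕ), ∃ W : D → Set X, ∀ d,
      (IsOpen V → V.Nonempty → IsOpen (W d) ∧ (W d).Nonempty ∧ closure (W d) ⊆ V ∧
        Bornology.IsBounded (W d) ∧ Metric.diam (W d) ≤ (1/2)^n) ∧
      (Cond V n d → W d = U d) := by
    intro V n
    by_cases hV : IsOpen V ∧ V.Nonempty
    · obtain ⟨x, hx⟩ := hV.2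
      obtain ⟨ε, hε, hball⟩ := Metric.isOpen_iff.mp hV.1 x hx
      set δ : ℝ := min (ε/2) ((1/2)^n/2) with hδdef
      have hδ : 0 < δ := lt_min (by linarith) (by positivity)
      have hδε : δ < ε := lt_of_le_of_lt (min_le_left _ _) (by linarith)
      have hfb : IsOpen (Metric.ball x δ) ∧ (Metric.ball x δ).Nonempty ∧
          closure (Metric.ball x δ) ⊆ V ∧ Bornology.IsBounded (Metric.ball x δ) ∧
          Metric.diam (Metric.ball x δ) ≤ (1/2)^n := by
        refine ⟨Metric.isOpen_ball, ⟨x, Metric.mem_ball_self hδ⟩, ?_, Metric.isBounded_ball, ?_⟩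
        · exact (Metric.closure_ball_subset_closedBall.trans
            (Metric.closedBall_subset_ball hδε)).trans hball
        · calc Metric.diam (Metric.ball x δ) ≤ 2 * δ := Metric.diam_ball hδ.le
            _ ≤ 2 * ((1/2)^n/2) := by
                have := min_le_right (ε/2) ((1/2)^n/2); linarith
            _ = (1/2)^n := by ring
      refine ⟨fun d => if h : Cond V n d then U d else Metric.ball x δ,
        fun d => ⟨fun _ _ => ?_, fun h => dif_pos h⟩⟩
      by_cases h : Cond V n d
      · simp only [dif_pos h]
        exact ⟨hUopen d, h.2.2.2, h.1, h.2.1, h.2.2.1⟩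
      · simpa only [dif_neg h] using hfb
    · exact ⟨fun d => if h : Cond V n d then U d else ∅,
        fun d => ⟨fun h1 h2 => absurd ⟨h1, h2⟩ hV, fun h => dif_pos h⟩⟩
  choose st hst using hstepEx
  -- the scheme of open sets
  set g : Set X × ℕ → D → Set X × ℕ := fun p d => (st p.1 p.2 d, p.2 + 1) with hg
  set Vf : List D → Set X := fun s => (s.foldl g (Set.univ, 0)).1 with hVf
  have hlen' : ∀ (s : List D) (q : Set X × ℕ), (s.foldl g q).2 = q.2 + s.length := by
    intro s
    induction s with
    | nil => simp
    | cons d s ih =>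
      intro q; rw [List.foldl_cons, ih, List.length_cons]
      show q.2 + 1 + s.length = q.2 + (s.length + 1); omega
  have hVfapp : ∀ (s : List D) (d : D), Vf (s ++ [d]) = st (Vf s) s.length d := by
    intro s d
    show (List.foldl g (Set.univ, 0) (s ++ [d])).1 = _
    rw [List.foldl_append]
    show st (List.foldl g (Set.univ, 0) s).1 (List.foldl g (Set.univ, 0) s).2 d = _
    rw [hlen']
    simp [hVf]
  have hInv : ∀ s : List D, IsOpen (Vf s) ∧ (Vf s).Nonempty := by
    intro s
    induction s using List.reverseRecOn with
    | nil => exact ⟨isOpen_univ, Set.univ_nonempty⟩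
    | append_singleton s d ih =>
        rw [hVfapp]
        have h := (hst (Vf s) s.length d).1 ih.1 ih.2
        exact ⟨h.1, h.2.1⟩
  have hstepProps : ∀ (s : List D) (d : D), IsOpen (Vf (s ++ [d])) ∧
      (Vf (s ++ [d])).Nonempty ∧ closure (Vf (s ++ [d])) ⊆ Vf s ∧
      Bornology.IsBounded (Vf (s ++ [d])) ∧ Metric.diam (Vf (s ++ [d])) ≤ (1/2)^s.length := by
    intro s d
    rw [hVfapp]
    exact (hst (Vf s) s.length d).1 (hInv s).1 (hInv s).2
  have hsub : ∀ (s : List D) (d : D), Vf (s ++ [d]) ⊆ Vf s :=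
    fun s d => subset_closure.trans (hstepProps s d).2.2.1
  have hmonoV : ∀ (s u : List D), Vf (s ++ u) ⊆ Vf s := by
    intro s u
    induction u using List.reverseRecOn with
    | nil => simp
    | append_singleton u d ih =>
        rw [← List.append_assoc]
        exact (hsub (s ++ u) d).trans ih
  -- key refinement lemma
  have hkey : ∀ (s : List D) (G : Set X) (x : X), IsOpen G → x ∈ G → G ⊆ Vf s →
      ∃ d, x ∈ Vf (s ++ [d]) ∧ Vf (s ++ [d]) ⊆ G := by
    intro s G x hG hxG hGV
    obtain ⟨ε, hε, hball⟩ := Metric.isOpen_iff.mp hG x hxG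
    set n := s.length with hn
    set δ : ℝ := min (ε/2) ((1/2)^n/2) with hδdef
    have hδ : 0 < δ := lt_min (by linarith) (by positivity)
    have hδε : δ < ε := lt_of_le_of_lt (min_le_left _ _) (by linarith)
    obtain ⟨B, hBmem, hxB, hBsub⟩ :=
      hB.exists_subset_of_mem_open (Metric.mem_ball_self hδ) Metric.isOpen_ball
    obtain ⟨d, hd⟩ := hUsurj B hBmem
    have hsubball : U d ⊆ Metric.ball x δ := hd ▸ hBsub
    have hcbV : Metric.ball x δ ⊆ G := fun y hy =>
      hball (Metric.ball_subset_ball hδε.le hy)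
    have hcond : Cond (Vf s) n d := by
      refine ⟨?_, Metric.isBounded_ball.subset hsubball, ?_, ⟨x, hd ▸ hxB⟩⟩
      · calc closure (U d) ⊆ closure (Metric.ball x δ) := closure_mono hsubball
          _ ⊆ Metric.closedBall x δ := Metric.closure_ball_subset_closedBall
          _ ⊆ Metric.ball x ε := Metric.closedBall_subset_ball hδε
          _ ⊆ G := hball
          _ ⊆ Vf s := hGV
      · calc Metric.diam (U d) ≤ Metric.diam (Metric.ball x δ) :=
            Metric.diam_mono hsubball Metric.isBounded_ball
          _ ≤ 2 * δ := Metric.diam_ball hδ.le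
          _ ≤ 2 * ((1/2)^n/2) := by
              have := min_le_right (ε/2) ((1/2)^n/2); linarith
          _ = (1/2)^n := by ring
    have heq : Vf (s ++ [d]) = U d := by
      rw [hVfapp]; exact (hst (Vf s) n d).2 hcond
    exact ⟨d, by rw [heq, hd]; exact hxB, by rw [heq]; exact hsubball.trans hcbV⟩
  -- the tree of sets in the ideal
  set f : List D → Set (Set ℕ) := fun s => {A | A ∈ I ∧ F A ∩ Vf s = ∅} with hf
  have h1 : ∀ s t : List D, s <+: t → f s ⊆ f t := by
    rintro s t ⟨u, rfl⟩ A ⟨hA, hdisj⟩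
    refine ⟨hA, Set.eq_empty_iff_forall_notMem.mpr fun x hx => ?_⟩
    exact Set.eq_empty_iff_forall_notMem.mp hdisj x ⟨hx.1, hmonoV s u hx.2⟩
  have h2 : ∀ s : List D, f s ⊆ I := fun s A hA => hA.1
  have h3 : ∀ s : List D, ∀ A ∈ f s, ∀ B : Set ℕ, B ⊆ A → B ∈ f s := by
    rintro s A ⟨hAI, hd⟩ B hBA
    refine ⟨hI.2.1 A hAI B hBA, Set.eq_empty_iff_forall_notMem.mpr fun x hx => ?_⟩
    exact Set.eq_empty_iff_forall_notMem.mp hd x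
      ⟨hmono B (hI.2.1 A hAI B hBA) A hAI hBA hx.1, hx.2⟩
  have h4 : ∀ s : List D, (⋃ d : D, f (s ++ [d])) = I := by
    intro s
    apply Set.Subset.antisymm
    · exact Set.iUnion_subset fun d => h2 (s ++ [d])
    · intro A hA
      have hnd : interior (closure (F A)) = ∅ := hnwd A hA
      have hGopen : IsOpen (Vf s \ closure (F A)) := (hInv s).1.sdiff isClosed_closure
      have hGne : (Vf s \ closure (F A)).Nonempty := by
        rcases (hInv s).2 with ⟨y, hy⟩
        by_contra hcon
        push_neg at hcon
        have hsubC : Vf s ⊆ closure (F A) := fun z hz => by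
          by_contra hzC
          exact (Set.not_nonempty_iff_eq_empty.mpr rfl).elim
            (hcon ▸ Set.nonempty_of_mem ⟨hz, hzC⟩ : (∅ : Set X).Nonempty)
        have : Vf s ⊆ interior (closure (F A)) :=
          (hInv s).1.subset_interior_iff.mpr hsubC
        rw [hnd] at this
        exact this hy
      obtain ⟨y, hy⟩ := hGne
      obtain ⟨d, -, hsubG⟩ := hkey s (Vf s \ closure (F A)) y hGopen hy Set.diff_subset
      refine Set.mem_iUnion.mpr ⟨d, hA, Set.eq_empty_iff_forall_notMem.mpr fun x hx => ?_⟩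
      exact (hsubG hx.2).2 (subset_closure hx.1)
  have h5 : ∀ s : List D, f s = ⋂ d : D, f (s ++ [d]) := by
    intro s
    apply Set.Subset.antisymm
    · exact Set.subset_iInter fun d => h1 s (s ++ [d]) ⟨[d], rfl⟩
    · intro A hA
      obtain ⟨d0⟩ : Nonempty D := inferInstance
      have hAI : A ∈ I := (Set.mem_iInter.mp hA d0).1
      refine ⟨hAI, Set.eq_empty_iff_forall_notMem.mpr fun x hx => ?_⟩
      obtain ⟨d, hxd, -⟩ := hkey s (Vf s) x (hInv s).1 hx.2 subset_rfl
      exact Set.eq_empty_iff_forall_notMem.mp (Set.mem_iInter.mp hA d).2 x ⟨hx.1, hxd⟩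
  obtain ⟨σ, hσ⟩ := htree f h1 h2 h3 h4 h5
  set sk : ℕ → List D := fun k => List.ofFn fun i : Fin k => σ i with hsk0
  have hsk : ∀ k, sk (k + 1) = sk k ++ [σ k] := by
    intro k
    show List.ofFn (fun i : Fin (k+1) => σ ↑i) = (List.ofFn fun i : Fin k => σ ↑i) ++ [σ k]
    rw [List.ofFn_succ', List.concat_eq_append]
    simp only [Fin.coe_castSucc, Fin.val_last]
  have hsklen : ∀ k, (sk k).length = k := by intro k; simp [hsk0]
  have hnest : ∀ k m, k ≤ m → Vf (sk m) ⊆ Vf (sk k) := by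
    intro k m hkm
    induction m, hkm using Nat.le_induction with
    | base => exact subset_rfl
    | succ m hm ih => rw [hsk m]; exact (hsub (sk m) (σ m)).trans ih
  have hpts : ∀ k : ℕ, ∃ x, x ∈ Vf (sk (k + 1)) := fun k => (hInv (sk (k + 1))).2
  choose p hp using hpts
  have hdiam : ∀ k, Metric.diam (Vf (sk (k + 1))) ≤ (1/2)^k ∧
      Bornology.IsBounded (Vf (sk (k + 1))) := by
    intro k
    have := hstepProps (sk k) (σ k)
    rw [← hsk k, hsklen k] at this
    exact ⟨this.2.2.2.2, this.2.2.2.1⟩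
  have hcauchy : CauchySeq p := by
    apply cauchySeq_of_le_geometric_two
    intro n
    have h1m : p n ∈ Vf (sk (n + 1)) := hp n
    have h2m : p (n + 1) ∈ Vf (sk (n + 1)) := hnest (n + 1) (n + 2) (by omega) (hp (n + 1))
    calc dist (p n) (p (n + 1)) ≤ Metric.diam (Vf (sk (n + 1))) :=
        Metric.dist_le_diam_of_mem (hdiam n).2 h1m h2m
      _ ≤ (1/2)^n := (hdiam n).1
      _ = 2 / 2 / 2^n := by rw [div_pow, one_pow]; norm_num
  obtain ⟨x, hx⟩ := cauchySeq_tendsto_of_complete hcauchy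
  have hxmem : ∀ k, x ∈ Vf (sk k) := by
    intro k
    have hcl : x ∈ closure (Vf (sk (k + 1))) := by
      refine mem_closure_of_tendsto hx ?_
      refine Filter.eventually_atTop.mpr ⟨k, fun m hm => ?_⟩
      exact hnest (k + 1) (m + 1) (by omega) (hp m)
    have hsubcl : closure (Vf (sk (k + 1))) ⊆ Vf (sk k) := by
      rw [hsk k]; exact (hstepProps (sk k) (σ k)).2.2.1
    exact hsubcl hcl
  have hxU : x ∈ ⋃ A ∈ I, F A := hcontra ▸ Set.mem_univ x
  obtain ⟨A, hAI, hxA⟩ := Set.mem_iUnion₂.mp hxU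
  have hAm : A ∈ ⋃ k : ℕ, f (List.ofFn fun i : Fin k => σ i) := hσ.symm ▸ hAI
  obtain ⟨k, hk⟩ := Set.mem_iUnion.mp hAm
  exact Set.eq_empty_iff_forall_notMem.mp hk.2 x ⟨hxA, hxmem k⟩
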